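/- Let A be a tree-bonded assembly with fixed configuration A₀, let τ be a positive integer, let v ∈ ℤ², and let S be a set of at least two binding sites between A₀ and A₀ + v whose strengths sum to at least τ. Let T₁ be the spanned subtree in the bond graph of A₀ of the first endpoints of the binding sites in S and T₂ the spanned subtree in the bond graph of A₀ + v of the second endpoints, and suppose the position sets of T₁ and T₂ are disjoint. Then the configuration C̃ obtained as the union of the restriction of A₀ to the positions of T₁ and the restriction of A₀ + v to the positions of T₂ has a connected bond graph, the edge cut of the bond graph of C̃ separating the positions of T₁ from the positions of T₂ has total weight at least τ, and the assembly of C̃ is not a subassembly of A. -/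

import Mathlib

namespace TwoHAM

/-- A tile: a non-rotating unit square with a glue on each of its four sides. -/
structure Tile (Glue : Type) where
  north : Glue
  south : Glue
  east : Glue
  west : Glue

variable {Glue : Type}

/-- The strength of the abutting glues of tile `t₁` placed at position `p` and tile `t₂`
placed at position `q`; zero if `p` and `q` are not adjacent. -/
def bondStrength (str : Glue → Glue → ℕ) (t₁ t₂ : Tile Glue) (p q : ℤ × ℤ) : ℕ :=
  if q = (p.1 + 1, p.2) then str t₁.east t₂.west
  else if q = (p.1 - 1, p.2) then str t₁.west t₂.east
  else if q = (p.1, p.2 + 1) then str t₁.north t₂.south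
  else if q = (p.1, p.2 - 1) then str t₁.south t₂.north
  else 0

/-- A configuration: a partial function from `ℤ²` to tiles with finite nonempty domain. -/
structure Config (Glue : Type) where
  tiles : ℤ × ℤ → Option (Tile Glue)
  finite : {p : ℤ × ℤ | tiles p ≠ none}.Finite
  nonempty : {p : ℤ × ℤ | tiles p ≠ none}.Nonempty

namespace Config

/-- The domain of a configuration. -/
def dom (C : Config Glue) : Set (ℤ × ℤ) := {p : ℤ × ℤ | C.tiles p ≠ none}

end Config

/-- The glue strength contributed between position `p` of configuration `C₁` and
position `q` of configuration `C₂`. -/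
def crossBond (str : Glue → Glue → ℕ) (C₁ C₂ : Config Glue) (p q : ℤ × ℤ) : ℕ :=
  match C₁.tiles p, C₂.tiles q with
  | some t₁, some t₂ => bondStrength str t₁ t₂ p q
  | _, _ => 0

/-- `(p, q)` is a binding site between configurations `C₁` and `C₂` if the abutting glues
of the tiles of `C₁` at `p` and of `C₂` at `q` have positive strength. -/
def IsBindingSite (str : Glue → Glue → ℕ) (C₁ C₂ : Config Glue) (p q : ℤ × ℤ) : Prop :=
  0 < crossBond str C₁ C₂ p q

namespace Config

/-- The glue strength between positions `p` and `q` within a configuration. -/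
def bond (str : Glue → Glue → ℕ) (C : Config Glue) (p q : ℤ × ℤ) : ℕ :=
  crossBond str C C p q

/-- The bond graph of a configuration: adjacent positions with positive abutting glue
strength are joined by an edge. -/
def bondGraph (str : Glue → Glue → ℕ) (C : Config Glue) : SimpleGraph (ℤ × ℤ) where
  Adj p q := p ≠ q ∧ (0 < C.bond str p q ∨ 0 < C.bond str q p)
  symm := by
    constructor
    rintro p q ⟨h1, h2⟩
    exact ⟨h1.symm, h2.symm⟩
  loopless := by
    constructor
    rintro p ⟨h1, _⟩
    exact h1 rfl

/-- The bond graph of a configuration is connected (all positions of the domain are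
mutually reachable). -/
def Connected (str : Glue → Glue → ℕ) (C : Config Glue) : Prop :=
  ∀ p ∈ C.dom, ∀ q ∈ C.dom, (C.bondGraph str).Reachable p q

/-- The domain of a configuration as a finset. -/
noncomputable def domFinset (C : Config Glue) : Finset (ℤ × ℤ) := C.finite.toFinset

/-- The total weight of the edge cut of the bond graph determined by a set `S`. -/
noncomputable def cutWeight (str : Glue → Glue → ℕ) (C : Config Glue)
    (S : Finset (ℤ × ℤ)) : ℕ :=
  ∑ p ∈ S, ∑ q ∈ C.domFinset \ S, C.bond str p q

/-- A configuration is `τ`-stable if its bond graph is connected and every edge cut has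
total weight at least `τ`. -/
def IsStable (str : Glue → Glue → ℕ) (τ : ℕ) (C : Config Glue) : Prop :=
  C.Connected str ∧
    ∀ S : Finset (ℤ × ℤ), S ⊆ C.domFinset → S.Nonempty → (C.domFinset \ S).Nonempty →
      τ ≤ C.cutWeight str S

/-- The translation of a configuration by a vector `v`. -/
def translate (C : Config Glue) (v : ℤ × ℤ) : Config Glue where
  tiles p := C.tiles (p - v)
  finite := by
    have h : {p : ℤ × ℤ | C.tiles (p - v) ≠ none} =
        (fun q : ℤ × ℤ => q + v) '' {p : ℤ × ℤ | C.tiles p ≠ none} := by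
      ext p
      constructor
      · intro hp
        exact ⟨p - v, hp, sub_add_cancel p v⟩
      · rintro ⟨q, hq, rfl⟩
        simpa using hq
    rw [h]
    exact C.finite.image _
  nonempty := by
    obtain ⟨p, hp⟩ := C.nonempty
    exact ⟨p + v, by simpa using hp⟩

/-- `C₁` is a restriction of `C₂`. -/
def Subconfig (C₁ C₂ : Config Glue) : Prop :=
  ∀ p : ℤ × ℤ, C₁.tiles p ≠ none → C₁.tiles p = C₂.tiles p

/-- A configuration is tree-bonded if its bond graph is a tree (connected and acyclic). -/
def IsTreeBonded (str : Glue → Glue → ℕ) (C : Config Glue) : Prop :=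
  C.Connected str ∧ (C.bondGraph str).IsAcyclic

end Config

/-- The assembly of a configuration: the set of all of its translations. -/
def asmOf (C : Config Glue) : Set (Config Glue) := {C' | ∃ v : ℤ × ℤ, C' = C.translate v}

/-- A set of configurations is an assembly if it is the set of all translations of some
configuration. -/
def IsAssembly (A : Set (Config Glue)) : Prop := ∃ C : Config Glue, A = asmOf C

/-- An assembly is `τ`-stable if its configurations are. -/
def IsStableAssembly (str : Glue → Glue → ℕ) (τ : ℕ) (A : Set (Config Glue)) : Prop :=
  ∀ C ∈ A, C.IsStable str τ

/-- An assembly is tree-bonded if the bond graph of its configurations is a tree. -/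
def IsTreeBondedAssembly (str : Glue → Glue → ℕ) (A : Set (Config Glue)) : Prop :=
  ∀ C ∈ A, C.IsTreeBonded str

/-- `A ⊑ B`: some configuration of `A` is a restriction of some configuration of `B`. -/
def Subassembly (A B : Set (Config Glue)) : Prop :=
  ∃ C₁ ∈ A, ∃ C₂ ∈ B, Config.Subconfig C₁ C₂

/-- Union of two partial tile maps (preferring the first). -/
def optOr {α : Type} (a b : Option α) : Option α :=
  match a with
  | some x => some x
  | none => b

/-- Assemblies `A` and `B` are `τ`-combinable into `C`. -/
def Combinable (str : Glue → Glue → ℕ) (τ : ℕ) (A B C : Set (Config Glue)) : Prop :=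
  ∃ CA ∈ A, ∃ CB ∈ B, ∃ CC ∈ C,
    (∀ p : ℤ × ℤ, CC.tiles p = optOr (CA.tiles p) (CB.tiles p)) ∧
    CA.dom ∩ CB.dom = ∅ ∧
    CC.IsStable str τ

/-- The configuration consisting of a single tile `t` at the origin. -/
def singletonConfig (t : Tile Glue) : Config Glue where
  tiles p := if p = ((0 : ℤ), (0 : ℤ)) then some t else none
  finite := by
    apply Set.Finite.subset (Set.finite_singleton ((0 : ℤ), (0 : ℤ)))
    intro p hp
    by_cases h : p = ((0 : ℤ), (0 : ℤ)) <;> simp_all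
  nonempty := ⟨((0 : ℤ), (0 : ℤ)), by simp⟩

/-- The producible assemblies of the 2HAM system `Γ = (T, τ)`. -/
inductive Producible (str : Glue → Glue → ℕ) (T : Set (Tile Glue)) (τ : ℕ) :
    Set (Config Glue) → Prop
  | single (t : Tile Glue) (ht : t ∈ T) : Producible str T τ (asmOf (singletonConfig t))
  | combine {A B C : Set (Config Glue)} : Producible str T τ A → Producible str T τ B →
      Combinable str τ A B C → Producible str T τ C

/-- A producible assembly is terminal if it is not `τ`-combinable with any producible
assembly. -/
def Terminal (str : Glue → Glue → ℕ) (T : Set (Tile Glue)) (τ : ℕ)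
    (A : Set (Config Glue)) : Prop :=
  Producible str T τ A ∧
    ∀ B C : Set (Config Glue), Producible str T τ B → ¬ Combinable str τ A B C

/-- `Γ = (T, τ)` uniquely produces `A`. -/
def UniquelyProduces (str : Glue → Glue → ℕ) (T : Set (Tile Glue)) (τ : ℕ)
    (A : Set (Config Glue)) : Prop :=
  (∀ X : Set (Config Glue), Terminal str T τ X ↔ X = A) ∧
    ∀ B : Set (Config Glue), Producible str T τ B → Subassembly B A

/-- The modified strength function of the noncooperative (temperature 1) system:
strength `1` exactly for glue pairs of strength at least `τ`. -/
def capStr (str : Glue → Glue → ℕ) (τ : ℕ) : Glue → Glue → ℕ :=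
  fun g g' => if τ ≤ str g g' then 1 else 0

/-- A `τ`-combination that uses cooperative binding: every binding site between the two
combined configurations has strength strictly less than `τ`. -/
def CombinableCoop (str : Glue → Glue → ℕ) (τ : ℕ) (A B C : Set (Config Glue)) : Prop :=
  ∃ CA ∈ A, ∃ CB ∈ B, ∃ CC ∈ C,
    (∀ p : ℤ × ℤ, CC.tiles p = optOr (CA.tiles p) (CB.tiles p)) ∧
    CA.dom ∩ CB.dom = ∅ ∧
    CC.IsStable str τ ∧
    ∀ p q : ℤ × ℤ, crossBond str CA CB p q < τ

end TwoHAM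

namespace TwoHAM

/-- The set of positions of the spanned subtree of a set `pts` of vertices in an acyclic
graph `G`: the positions lying on the (unique) path between some pair of points of
`pts`. -/
def spannedSet (G : SimpleGraph (ℤ × ℤ)) (pts : Set (ℤ × ℤ)) : Set (ℤ × ℤ) :=
  {x : ℤ × ℤ | ∃ a ∈ pts, ∃ b ∈ pts, ∃ W : G.Walk a b, W.IsPath ∧ x ∈ W.support}

/-- The total weight of the edge cut of the bond graph of `C` separating the positions in
`S` from the rest of the domain. -/
noncomputable def Config.cutWeightSet {Glue : Type} (str : Glue → Glue → ℕ)
    (C : Config Glue) (S : Set (ℤ × ℤ)) : ℕ := by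
  classical
  exact ∑ p ∈ C.domFinset, ∑ q ∈ C.domFinset,
    if p ∈ S ∧ q ∉ S then C.bond str p q else 0

end TwoHAM

namespace TwoHAM

open SimpleGraph

variable {Glue : Type}

lemma Config.ext' {C D : Config Glue} (h : C.tiles = D.tiles) : C = D := by
  cases C; cases D; cases h; rfl

lemma translate_zero (C : Config Glue) : C.translate 0 = C :=
  Config.ext' (funext fun p => by simp [Config.translate])

lemma crossBond_pos {str : Glue → Glue → ℕ} {C₁ C₂ : Config Glue} {p q : ℤ × ℤ}
    (h : 0 < crossBond str C₁ C₂ p q) : C₁.tiles p ≠ none ∧ C₂.tiles q ≠ none := by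
  cases h1 : C₁.tiles p <;> cases h2 : C₂.tiles q <;>
    simp [crossBond, h1, h2] at h ⊢

lemma crossBond_congr {str : Glue → Glue → ℕ} {C₁ C₂ D₁ D₂ : Config Glue} {p q : ℤ × ℤ}
    (h1 : C₁.tiles p = D₁.tiles p) (h2 : C₂.tiles q = D₂.tiles q) :
    crossBond str C₁ C₂ p q = crossBond str D₁ D₂ p q := by
  unfold crossBond; rw [h1, h2]

lemma bondStrength_translate (str : Glue → Glue → ℕ) (t₁ t₂ : Tile Glue) (p q d : ℤ × ℤ) :
    bondStrength str t₁ t₂ (p + d) (q + d) = bondStrength str t₁ t₂ p q := by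
  have h1 : (q + d = ((p + d).1 + 1, (p + d).2)) ↔ q = (p.1 + 1, p.2) := by
    simp [Prod.ext_iff]; omega
  have h2 : (q + d = ((p + d).1 - 1, (p + d).2)) ↔ q = (p.1 - 1, p.2) := by
    simp [Prod.ext_iff]; omega
  have h3 : (q + d = ((p + d).1, (p + d).2 + 1)) ↔ q = (p.1, p.2 + 1) := by
    simp [Prod.ext_iff]; omega
  have h4 : (q + d = ((p + d).1, (p + d).2 - 1)) ↔ q = (p.1, p.2 - 1) := by
    simp [Prod.ext_iff]; omega
  unfold bondStrength
  simp only [h1, h2, h3, h4]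

lemma crossBond_translate_eq {str : Glue → Glue → ℕ} {C D : Config Glue} {p q d : ℤ × ℤ}
    (h1 : C.tiles p = D.tiles (p + d)) (h2 : C.tiles q = D.tiles (q + d)) :
    crossBond str D D (p + d) (q + d) = crossBond str C C p q := by
  unfold crossBond
  rw [← h1, ← h2]
  cases C.tiles p <;> cases C.tiles q <;> simp [bondStrength_translate]

lemma adj_dom {str : Glue → Glue → ℕ} {C : Config Glue} {p q : ℤ × ℤ}
    (h : (C.bondGraph str).Adj p q) : C.tiles p ≠ none ∧ C.tiles q ≠ none := by
  rcases h with ⟨-, h | h⟩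
  · exact crossBond_pos h
  · exact (crossBond_pos h).symm

lemma support_dom {str : Glue → Glue → ℕ} {C : Config Glue} {a b : ℤ × ℤ}
    (W : (C.bondGraph str).Walk a b) (hb : C.tiles b ≠ none) :
    ∀ x ∈ W.support, C.tiles x ≠ none := by
  induction W with
  | nil => intro x hx; simp at hx; subst hx; exact hb
  | cons h W ih =>
      intro x hx
      rw [Walk.support_cons] at hx
      rcases List.mem_cons.mp hx with rfl | hx
      · exact (adj_dom h).1
      · exact ih hb x hx

lemma mem_spanned_of_mem_pts {G : SimpleGraph (ℤ × ℤ)} {pts : Set (ℤ × ℤ)} {a : ℤ × ℤ}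
    (ha : a ∈ pts) : a ∈ spannedSet G pts :=
  ⟨a, ha, a, ha, Walk.nil, Walk.IsPath.nil, by simp⟩

lemma spanned_dom {str : Glue → Glue → ℕ} {C : Config Glue} {pts : Set (ℤ × ℤ)}
    (hpts : pts ⊆ C.dom) {x : ℤ × ℤ}
    (hx : x ∈ spannedSet (C.bondGraph str) pts) : C.tiles x ≠ none := by
  obtain ⟨a, ha, b, hb, W, -, hxs⟩ := hx
  exact support_dom W (hpts hb) x hxs

lemma spanned_walk {str : Glue → Glue → ℕ} {C : Config Glue} (hconn : C.Connected str)
    {pts : Set (ℤ × ℤ)} (hpts : pts ⊆ C.dom) {x y : ℤ × ℤ}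
    (hx : x ∈ spannedSet (C.bondGraph str) pts)
    (hy : y ∈ spannedSet (C.bondGraph str) pts) :
    ∃ W : (C.bondGraph str).Walk x y,
      ∀ z ∈ W.support, z ∈ spannedSet (C.bondGraph str) pts := by
  classical
  obtain ⟨a, ha, b, hb, Wab, hWab, hxs⟩ := hx
  obtain ⟨c, hc, d, hd, Wcd, hWcd, hys⟩ := hy
  obtain ⟨Wac⟩ := hconn a (hpts ha) c (hpts hc)
  refine ⟨((Wab.takeUntil x hxs).reverse).append
    ((Wac.toPath : (C.bondGraph str).Walk a c).append (Wcd.takeUntil y hys)), ?_⟩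
  intro z hz
  rw [Walk.mem_support_append_iff] at hz
  rcases hz with hz | hz
  · rw [Walk.support_reverse, List.mem_reverse] at hz
    exact ⟨a, ha, b, hb, Wab, hWab, Walk.support_takeUntil_subset _ _ hz⟩
  · rw [Walk.mem_support_append_iff] at hz
    rcases hz with hz | hz
    · exact ⟨a, ha, c, hc, Wac.toPath, Wac.toPath.2, hz⟩
    · exact ⟨c, hc, d, hd, Wcd, hWcd, Walk.support_takeUntil_subset _ _ hz⟩

lemma walk_transfer {V : Type} {G H : SimpleGraph V} {s : Set V}
    (hadj : ∀ ⦃u w : V⦄, u ∈ s → w ∈ s → G.Adj u w → H.Adj u w) :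
    ∀ {a b : V} (W : G.Walk a b), (∀ x ∈ W.support, x ∈ s) →
      ∃ W' : H.Walk a b, ∀ x ∈ W'.support, x ∈ s := by
  intro a b W
  induction W with
  | nil => intro h; exact ⟨Walk.nil, h⟩
  | @cons u w b h W ih =>
      intro hs
      have hu : u ∈ s := hs _ (by simp [Walk.support_cons])
      have hw : w ∈ s := hs _ (by rw [Walk.support_cons]; exact List.mem_cons_of_mem _ W.start_mem_support)
      obtain ⟨W', hW'⟩ := ih (fun x hx => hs x (by rw [Walk.support_cons]; exact List.mem_cons_of_mem _ hx))
      refine ⟨Walk.cons (hadj hu hw h) W', ?_⟩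
      intro x hx
      rw [Walk.support_cons] at hx
      rcases List.mem_cons.mp hx with rfl | hx
      · exact hu
      · exact hW' x hx

/-- Let `A` be a tree-bonded assembly with fixed configuration `A₀`, and
let `S` be a set of at least two binding sites between `A₀` and `A₀ + v` whose strengths
sum to at least `τ`. If the position sets of the spanned subtree `T₁` (in the bond graph
of `A₀`) of the first endpoints of `S` and of the spanned subtree `T₂` (in the bond graph
of `A₀ + v`) of the second endpoints of `S` are disjoint, then the configuration `C'`
obtained as the union of the restriction of `A₀` to the positions of `T₁` and the
restriction of `A₀ + v` to the positions of `T₂` has a connected bond graph, the edge cut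
of the bond graph of `C'` separating the positions of `T₁` from those of `T₂` has total
weight at least `τ`, and the assembly of `C'` is not a subassembly of `A`. -/
theorem spanned_subtrees_give_rogue {Glue : Type} [Fintype Glue]
    (str : Glue → Glue → ℕ) (hsym : ∀ g g' : Glue, str g g' = str g' g)
    (τ : ℕ) (hτ : 0 < τ)
    (A : Set (Config Glue)) (A₀ : Config Glue)
    (hA : A = asmOf A₀) (htree : IsTreeBondedAssembly str A)
    (v : ℤ × ℤ) (S : Finset ((ℤ × ℤ) × (ℤ × ℤ)))
    (hcard : 2 ≤ S.card)
    (hsites : ∀ b ∈ S, IsBindingSite str A₀ (A₀.translate v) b.1 b.2)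
    (hstr : τ ≤ ∑ b ∈ S, crossBond str A₀ (A₀.translate v) b.1 b.2)
    (pos₁ pos₂ : Set (ℤ × ℤ))
    (hpos₁ : pos₁ = spannedSet (A₀.bondGraph str) ↑(S.image Prod.fst))
    (hpos₂ : pos₂ = spannedSet ((A₀.translate v).bondGraph str) ↑(S.image Prod.snd))
    (hdisj : Disjoint pos₁ pos₂)
    (C' : Config Glue)
    (hC'₁ : ∀ p ∈ pos₁, C'.tiles p = A₀.tiles p)
    (hC'₂ : ∀ p ∈ pos₂, C'.tiles p = (A₀.translate v).tiles p)
    (hC'₃ : ∀ p : ℤ × ℤ, p ∉ pos₁ → p ∉ pos₂ → C'.tiles p = none) :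
    C'.Connected str ∧
      τ ≤ C'.cutWeightSet str pos₁ ∧
      ¬ Subassembly (asmOf C') A := by
  classical
  subst hpos₁ hpos₂
  set Av := A₀.translate v with hAv_def
  set pos₁ := spannedSet (A₀.bondGraph str) ↑(S.image Prod.fst) with hp1
  set pos₂ := spannedSet (Av.bondGraph str) ↑(S.image Prod.snd) with hp2
  have hA₀mem : A₀ ∈ A := hA ▸ ⟨0, (translate_zero A₀).symm⟩
  have hAvmem : Av ∈ A := hA ▸ ⟨v, rfl⟩
  obtain ⟨hconn₀, hacy₀⟩ := htree A₀ hA₀mem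
  obtain ⟨hconnv, hacyv⟩ := htree Av hAvmem
  have hpts₁dom : (↑(S.image Prod.fst) : Set (ℤ × ℤ)) ⊆ A₀.dom := by
    intro a ha
    obtain ⟨b, hb, rfl⟩ := Finset.mem_image.mp ha
    exact (crossBond_pos (hsites b hb)).1
  have hpts₂dom : (↑(S.image Prod.snd) : Set (ℤ × ℤ)) ⊆ Av.dom := by
    intro a ha
    obtain ⟨b, hb, rfl⟩ := Finset.mem_image.mp ha
    exact (crossBond_pos (hsites b hb)).2
  have hpos₁dom : ∀ p ∈ pos₁, A₀.tiles p ≠ none := fun p hp => spanned_dom hpts₁dom hp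
  have hpos₂dom : ∀ p ∈ pos₂, Av.tiles p ≠ none := fun p hp => spanned_dom hpts₂dom hp
  have hmem₁ : ∀ b ∈ S, b.1 ∈ pos₁ := fun b hb =>
    mem_spanned_of_mem_pts (Finset.mem_coe.mpr (Finset.mem_image_of_mem _ hb))
  have hmem₂ : ∀ b ∈ S, b.2 ∈ pos₂ := fun b hb =>
    mem_spanned_of_mem_pts (Finset.mem_coe.mpr (Finset.mem_image_of_mem _ hb))
  have hC'dom₁ : ∀ p ∈ pos₁, C'.tiles p ≠ none := fun p hp => by
    rw [hC'₁ p hp]; exact hpos₁dom p hp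
  have hC'dom₂ : ∀ p ∈ pos₂, C'.tiles p ≠ none := fun p hp => by
    rw [hC'₂ p hp]; exact hpos₂dom p hp
  have hC'dom : ∀ p, C'.tiles p ≠ none → p ∈ pos₁ ∨ p ∈ pos₂ := by
    intro p hp
    by_contra h
    push_neg at h
    exact hp (hC'₃ p h.1 h.2)
  have hadj₁ : ∀ ⦃u w : ℤ × ℤ⦄, u ∈ pos₁ → w ∈ pos₁ →
      (A₀.bondGraph str).Adj u w → (C'.bondGraph str).Adj u w := by
    intro u w hu hw ⟨hne, h⟩
    refine ⟨hne, ?_⟩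
    have e1 : C'.bond str u w = A₀.bond str u w :=
      crossBond_congr (hC'₁ u hu) (hC'₁ w hw)
    have e2 : C'.bond str w u = A₀.bond str w u :=
      crossBond_congr (hC'₁ w hw) (hC'₁ u hu)
    rw [e1, e2]
    exact h
  have hadj₂ : ∀ ⦃u w : ℤ × ℤ⦄, u ∈ pos₂ → w ∈ pos₂ →
      (Av.bondGraph str).Adj u w → (C'.bondGraph str).Adj u w := by
    intro u w hu hw ⟨hne, h⟩
    refine ⟨hne, ?_⟩
    have e1 : C'.bond str u w = Av.bond str u w :=
      crossBond_congr (hC'₂ u hu) (hC'₂ w hw)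
    have e2 : C'.bond str w u = Av.bond str w u :=
      crossBond_congr (hC'₂ w hw) (hC'₂ u hu)
    rw [e1, e2]
    exact h
  have hbondeq : ∀ b ∈ S, C'.bond str b.1 b.2 = crossBond str A₀ Av b.1 b.2 := by
    intro b hb
    exact crossBond_congr (hC'₁ b.1 (hmem₁ b hb)) (hC'₂ b.2 (hmem₂ b hb))
  have hcross : ∀ b ∈ S, (C'.bondGraph str).Adj b.1 b.2 := by
    intro b hb
    refine ⟨?_, Or.inl ?_⟩
    · intro h
      exact (Set.disjoint_left.mp hdisj (hmem₁ b hb)) (h ▸ hmem₂ b hb)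
    · rw [hbondeq b hb]
      exact hsites b hb
  have hwalk₁ : ∀ x ∈ pos₁, ∀ y ∈ pos₁,
      ∃ W : (C'.bondGraph str).Walk x y, ∀ z ∈ W.support, z ∈ pos₁ := by
    intro x hx y hy
    obtain ⟨W, hW⟩ := spanned_walk hconn₀ hpts₁dom hx hy
    exact walk_transfer hadj₁ W hW
  have hwalk₂ : ∀ x ∈ pos₂, ∀ y ∈ pos₂,
      ∃ W : (C'.bondGraph str).Walk x y, ∀ z ∈ W.support, z ∈ pos₂ := by
    intro x hx y hy
    obtain ⟨W, hW⟩ := spanned_walk hconnv hpts₂dom hx hy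
    exact walk_transfer hadj₂ W hW
  obtain ⟨b₀, hb₀⟩ : S.Nonempty := Finset.card_pos.mp (by omega)
  have hreach : ∀ p, C'.tiles p ≠ none → (C'.bondGraph str).Reachable p b₀.1 := by
    intro p hp
    rcases hC'dom p hp with h | h
    · obtain ⟨W, -⟩ := hwalk₁ p h b₀.1 (hmem₁ b₀ hb₀)
      exact ⟨W⟩
    · obtain ⟨W, -⟩ := hwalk₂ p h b₀.2 (hmem₂ b₀ hb₀)
      exact ⟨W.append (Walk.cons (hcross b₀ hb₀).symm Walk.nil)⟩
  refine ⟨?_, ?_, ?_⟩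
  · -- connectivity
    intro p hp q hq
    exact (hreach p hp).trans (hreach q hq).symm
  · -- cut weight
    have key : ∀ b ∈ S, b.1 ∈ C'.domFinset ∧ b.2 ∈ C'.domFinset := by
      intro b hb
      constructor <;> rw [Config.domFinset, Set.Finite.mem_toFinset]
      · exact hC'dom₁ b.1 (hmem₁ b hb)
      · exact hC'dom₂ b.2 (hmem₂ b hb)
    have hSsub : S ⊆ C'.domFinset ×ˢ C'.domFinset := by
      intro b hb
      rw [Finset.mem_product]
      exact key b hb
    calc τ ≤ ∑ b ∈ S, crossBond str A₀ Av b.1 b.2 := hstr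
      _ = ∑ b ∈ S, (if b.1 ∈ pos₁ ∧ b.2 ∉ pos₁ then C'.bond str b.1 b.2 else 0) := by
          refine Finset.sum_congr rfl fun b hb => ?_
          rw [if_pos ⟨hmem₁ b hb, fun h => (Set.disjoint_left.mp hdisj h) (hmem₂ b hb)⟩,
            hbondeq b hb]
      _ ≤ ∑ b ∈ C'.domFinset ×ˢ C'.domFinset,
            (if b.1 ∈ pos₁ ∧ b.2 ∉ pos₁ then C'.bond str b.1 b.2 else 0) :=
          Finset.sum_le_sum_of_subset hSsub
      _ = C'.cutWeightSet str pos₁ := by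
          rw [Config.cutWeightSet, Finset.sum_product]
  · -- not a subassembly
    rintro ⟨C₁, ⟨u, rfl⟩, C₂, hC₂, hsub⟩
    rw [hA] at hC₂
    obtain ⟨w, rfl⟩ := hC₂
    set d := u - w with hd
    have hemb : ∀ r, C'.tiles r ≠ none → C'.tiles r = A₀.tiles (r + d) := by
      intro r hr
      have := hsub (r + u) (by
        show (C'.translate u).tiles (r + u) ≠ none
        rw [Config.translate]
        simpa using hr)
      rw [Config.translate, Config.translate] at this
      simp only [add_sub_cancel_right] at this
      rw [this]
      congr 1
      rw [hd]
      abel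
    -- graph hom from C' to A₀ by translation
    have hinj : Function.Injective (fun r : ℤ × ℤ => r + d) :=
      fun a b h => by simpa using h
    have fadj : ∀ {r s : ℤ × ℤ}, (C'.bondGraph str).Adj r s →
        (A₀.bondGraph str).Adj (r + d) (s + d) := by
      rintro r s ⟨hne, h⟩
      have hdoms : C'.tiles r ≠ none ∧ C'.tiles s ≠ none := by
        rcases h with h | h
        · exact crossBond_pos h
        · exact (crossBond_pos h).symm
      refine ⟨fun hc => hne (hinj hc), ?_⟩
      have e1 : A₀.bond str (r + d) (s + d) = C'.bond str r s :=
        crossBond_translate_eq (hemb r hdoms.1) (hemb s hdoms.2)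
      have e2 : A₀.bond str (s + d) (r + d) = C'.bond str s r :=
        crossBond_translate_eq (hemb s hdoms.2) (hemb r hdoms.1)
      rw [e1, e2]
      exact h
    let f : C'.bondGraph str →g A₀.bondGraph str :=
      ⟨fun r => r + d, fun h => fadj h⟩
    obtain ⟨b₁, hb₁, b₂, hb₂, hne12⟩ := Finset.one_lt_card.mp (by omega : 1 < S.card)
    obtain ⟨M₁, hM₁⟩ := hwalk₁ b₁.1 (hmem₁ b₁ hb₁) b₂.1 (hmem₁ b₂ hb₂)
    obtain ⟨M₂, hM₂⟩ := hwalk₂ b₁.2 (hmem₂ b₁ hb₁) b₂.2 (hmem₂ b₂ hb₂)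
    -- map to A₀'s bond graph and take paths
    set P₁ : (A₀.bondGraph str).Path (b₁.1 + d) (b₂.1 + d) := (M₁.map f).toPath with hP₁
    set P₂ : (A₀.bondGraph str).Path (b₁.2 + d) (b₂.2 + d) := (M₂.map f).toPath with hP₂
    have hP₁supp : ∀ z ∈ P₁.1.support, ∃ z₀ ∈ pos₁, z = z₀ + d := by
      intro z hz
      have := Walk.support_toPath_subset (M₁.map f) hz
      rw [Walk.support_map] at this
      obtain ⟨z₀, hz₀, rfl⟩ := List.mem_map.mp this
      exact ⟨z₀, hM₁ z₀ hz₀, rfl⟩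
    have hP₂supp : ∀ z ∈ P₂.1.support, ∃ z₀ ∈ pos₂, z = z₀ + d := by
      intro z hz
      have := Walk.support_toPath_subset (M₂.map f) hz
      rw [Walk.support_map] at this
      obtain ⟨z₀, hz₀, rfl⟩ := List.mem_map.mp this
      exact ⟨z₀, hM₂ z₀ hz₀, rfl⟩
    have e₁ : (A₀.bondGraph str).Adj (b₁.1 + d) (b₁.2 + d) := fadj (hcross b₁ hb₁)
    have e₂ : (A₀.bondGraph str).Adj (b₂.2 + d) (b₂.1 + d) := (fadj (hcross b₂ hb₂)).symm
    -- walk P : b₁.1 + d → b₂.2 + d through pos₁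
    have hb22 : (b₂.2 + d) ∉ P₁.1.support := by
      intro h
      obtain ⟨z₀, hz₀, hz⟩ := hP₁supp _ h
      have : b₂.2 = z₀ := by
        have := hinj hz.symm
        simpa using this.symm
      exact (Set.disjoint_left.mp hdisj (this ▸ hz₀)) (hmem₂ b₂ hb₂)
    have hb11 : (b₁.1 + d) ∉ P₂.1.support := by
      intro h
      obtain ⟨z₀, hz₀, hz⟩ := hP₂supp _ h
      have : b₁.1 = z₀ := by
        have := hinj hz.symm
        simpa using this.symm
      exact (Set.disjoint_left.mp hdisj (this ▸ hmem₁ b₁ hb₁)) hz₀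
    set P : (A₀.bondGraph str).Walk (b₁.1 + d) (b₂.2 + d) :=
      (Walk.cons e₂ P₁.1.reverse).reverse with hPdef
    have hPpath : P.IsPath := (Walk.IsPath.cons (P₁.2.reverse)
      (by rwa [Walk.support_reverse, List.mem_reverse])).reverse
    set Q : (A₀.bondGraph str).Walk (b₁.1 + d) (b₂.2 + d) :=
      Walk.cons e₁ P₂.1 with hQdef
    have hQpath : Q.IsPath := Walk.IsPath.cons P₂.2 hb11
    have hPQ : P = Q := by
      have := isAcyclic_iff_path_unique.mp hacy₀ ⟨P, hPpath⟩ ⟨Q, hQpath⟩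
      exact congrArg Subtype.val this
    -- derive b₁ = b₂
    have hmemQ : (b₁.2 + d) ∈ Q.support := by
      rw [hQdef, Walk.support_cons]
      exact List.mem_cons_of_mem _ (Walk.start_mem_support _)
    have hmemP : (b₂.1 + d) ∈ P.support := by
      rw [hPdef, Walk.support_reverse, List.mem_reverse, Walk.support_cons]
      exact List.mem_cons_of_mem _ (by
        rw [Walk.support_reverse, List.mem_reverse]
        exact Walk.end_mem_support _)
    -- b₁.2 = b₂.2
    have h22 : b₁.2 = b₂.2 := by
      have h := hPQ ▸ hmemQ
      rw [hPdef, Walk.support_reverse, List.mem_reverse, Walk.support_cons] at h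
      rcases List.mem_cons.mp h with h | h
      · simpa using hinj h
      · exfalso
        rw [Walk.support_reverse, List.mem_reverse] at h
        obtain ⟨z₀, hz₀, hz⟩ := hP₁supp _ h
        have : b₁.2 = z₀ := by simpa using (hinj hz.symm).symm
        exact (Set.disjoint_left.mp hdisj (this ▸ hz₀)) (hmem₂ b₁ hb₁)
    have h11 : b₁.1 = b₂.1 := by
      have h := hPQ.symm ▸ hmemP
      rw [hQdef, Walk.support_cons] at h
      rcases List.mem_cons.mp h with h | h
      · simpa using (hinj h).symm
      · exfalso
        obtain ⟨z₀, hz₀, hz⟩ := hP₂supp _ h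
        have : b₂.1 = z₀ := by simpa using (hinj hz.symm).symm
        exact (Set.disjoint_left.mp hdisj (this ▸ hmem₁ b₂ hb₂)) hz₀
    exact hne12 (Prod.ext h11 h22)

end TwoHAM
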